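/- Suppose √n is an even natural number with n > 8⁴. Any deterministic topology recognition algorithm in the radio model with collision detection, executed on the graph G_n (√n components of size √n, half-graphs inside components, complete bipartite connections between components), requires a labeling scheme assigning more than n^{1/4} distinct labels. -/

import Mathlib

attribute [local instance] Classical.propDecidable

/-- Events observed by a node in one round of the radio model **with collision
detection**: a received message, "no message" (own transmission or a collision),
or silence. -/
inductive Event15
  | msg : List Bool → Event15
  | noMsg : Event15
  | silence : Event15

/-- The communication history of each node after `t` rounds of the deterministic
algorithm `step` (mapping a node's label and current history to `some m` = "transmit
`m`" or `none` = "listen") executed on graph `G` with labeling `L`, in the radio model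
with collision detection: a transmitting node appends `noMsg`; a listening node appends
`msg m` if exactly one neighbor transmits (with message `m`), `noMsg` if at least two
neighbors transmit (a collision), and `silence` if no neighbor transmits. -/
noncomputable def hist15 {V : Type*} (G : SimpleGraph V) (L : V → List Bool)
    (step : List Bool → List Event15 → Option (List Bool)) :
    ℕ → V → List Event15
  | 0, _ => []
  | t + 1, v =>
    let H : V → List Event15 := hist15 G L step t
    let tx : V → Prop := fun u => (step (L u) (H u)).isSome
    let ev : Event15 :=
      if tx v then Event15.noMsg
      else if h : ∃! u, G.Adj v u ∧ tx u then
        Event15.msg ((step (L h.exists.choose) (H h.exists.choose)).getD [])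
      else if ∃ u, G.Adj v u ∧ tx u then Event15.noMsg
      else Event15.silence
    H v ++ [ev]

/-- Adjacency inside a component: the half-graph relation on `Fin m ⊕ Fin m`,
where `a_j` (left) is adjacent to `b_t` (right) iff `t ≤ j` (0-indexed). -/
def halfAdj (m : ℕ) (x y : Fin m ⊕ Fin m) : Prop :=
  (∃ j t : Fin m, x = Sum.inl j ∧ y = Sum.inr t ∧ (t : ℕ) ≤ (j : ℕ)) ∨
  (∃ j t : Fin m, x = Sum.inr t ∧ y = Sum.inl j ∧ (t : ℕ) ≤ (j : ℕ))

/-- The lower-bound graph `G_n` with `s = √n`: `s` components, each on `s` vertices,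
all inter-component pairs adjacent, half-graphs inside components. -/
def Gn (s : ℕ) : SimpleGraph (Fin s × (Fin (s / 2) ⊕ Fin (s / 2))) where
  Adj x y := x ≠ y ∧ (x.1 ≠ y.1 ∨ halfAdj (s / 2) x.2 y.2)
  symm := ⟨by
    rintro x y ⟨hne, h | h⟩
    · exact ⟨hne.symm, Or.inl h.symm⟩
    · refine ⟨hne.symm, Or.inr ?_⟩
      rcases h with ⟨j, t, h1, h2, h3⟩ | ⟨j, t, h1, h2, h3⟩
      · exact Or.inr ⟨j, t, h2, h1, h3⟩
      · exact Or.inl ⟨j, t, h2, h1, h3⟩⟩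
  loopless := ⟨fun x h => h.1 rfl⟩

/-- The listener event at position `x` after round `t`. -/
noncomputable def lev15 {V : Type*} (G : SimpleGraph V) (L : V → List Bool)
    (step : List Bool → List Event15 → Option (List Bool)) (t : ℕ) (x : V) : Event15 :=
  if h : ∃! u, G.Adj x u ∧ ((step (L u) (hist15 G L step t u)).isSome : Prop) then
    Event15.msg ((step (L h.exists.choose) (hist15 G L step t h.exists.choose)).getD [])
  else if ∃ u, G.Adj x u ∧ ((step (L u) (hist15 G L step t u)).isSome : Prop) then Event15.noMsg
  else Event15.silence

theorem hist15_succ {V : Type*} (G : SimpleGraph V) (L : V → List Bool) (step) (t : ℕ) (v : V) :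
    hist15 G L step (t + 1) v = hist15 G L step t v ++
      [if ((step (L v) (hist15 G L step t v)).isSome : Prop) then Event15.noMsg
       else lev15 G L step t v] := rfl

theorem hist15_succ_eq {V : Type*} (G : SimpleGraph V) (L : V → List Bool) (step) (t : ℕ)
    (v w : V) (hL : L v = L w) (hH : hist15 G L step t v = hist15 G L step t w)
    (hlev : lev15 G L step t v = lev15 G L step t w) :
    hist15 G L step (t + 1) v = hist15 G L step (t + 1) w := by
  rw [hist15_succ, hist15_succ, hH, hL, hlev]

theorem lev15_eq_noMsg {V : Type*} (G : SimpleGraph V) (L : V → List Bool) (step) (t : ℕ)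
    (x u1 u2 : V) (h1 : G.Adj x u1) (h2 : G.Adj x u2) (hne : u1 ≠ u2)
    (ht1 : (step (L u1) (hist15 G L step t u1)).isSome = true)
    (ht2 : (step (L u2) (hist15 G L step t u2)).isSome = true) :
    lev15 G L step t x = Event15.noMsg := by
  unfold lev15
  rw [dif_neg, if_pos ⟨u1, h1, ht1⟩]
  rintro ⟨u, -, huniq⟩
  exact hne ((huniq u1 ⟨h1, ht1⟩).trans (huniq u2 ⟨h2, ht2⟩).symm)

theorem lev15_eq_of_all_adj {V : Type*} (G : SimpleGraph V) (L : V → List Bool) (step) (t : ℕ)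
    (x y : V)
    (hx : ∀ u, (step (L u) (hist15 G L step t u)).isSome = true → G.Adj x u)
    (hy : ∀ u, (step (L u) (hist15 G L step t u)).isSome = true → G.Adj y u) :
    lev15 G L step t x = lev15 G L step t y := by
  unfold lev15
  by_cases hg : ∃! u, (step (L u) (hist15 G L step t u)).isSome = true
  · have hxE : ∃! u, G.Adj x u ∧ (step (L u) (hist15 G L step t u)).isSome = true := by
      obtain ⟨u0, hu0, huniq⟩ := hg
      exact ⟨u0, ⟨hx u0 hu0, hu0⟩, fun u hu => huniq u hu.2⟩
    have hyE : ∃! u, G.Adj y u ∧ (step (L u) (hist15 G L step t u)).isSome = true := by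
      obtain ⟨u0, hu0, huniq⟩ := hg
      exact ⟨u0, ⟨hy u0 hu0, hu0⟩, fun u hu => huniq u hu.2⟩
    rw [dif_pos hxE, dif_pos hyE]
    have ex : hxE.exists.choose = hyE.exists.choose :=
      hg.unique hxE.exists.choose_spec.2 hyE.exists.choose_spec.2
    rw [ex]
  · have hx' : ¬ ∃! u, G.Adj x u ∧ (step (L u) (hist15 G L step t u)).isSome = true := by
      rintro ⟨u, hu, hun⟩
      exact hg ⟨u, hu.2, fun u' hu' => hun u' ⟨hx u' hu', hu'⟩⟩
    have hy' : ¬ ∃! u, G.Adj y u ∧ (step (L u) (hist15 G L step t u)).isSome = true := by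
      rintro ⟨u, hu, hun⟩
      exact hg ⟨u, hu.2, fun u' hu' => hun u' ⟨hy u' hu', hu'⟩⟩
    rw [dif_neg hx', dif_neg hy']
    by_cases he : ∃ u, (step (L u) (hist15 G L step t u)).isSome = true
    · rw [if_pos ⟨he.choose, hx _ he.choose_spec, he.choose_spec⟩,
        if_pos ⟨he.choose, hy _ he.choose_spec, he.choose_spec⟩]
    · rw [if_neg (fun ⟨u, _, hu⟩ => he ⟨u, hu⟩), if_neg (fun ⟨u, _, hu⟩ => he ⟨u, hu⟩)]

theorem gn_adj_of_fst_ne {s : ℕ} {x y : Fin s × (Fin (s / 2) ⊕ Fin (s / 2))}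
    (h : x.1 ≠ y.1) : (Gn s).Adj x y :=
  ⟨fun he => h (by rw [he]), Or.inl h⟩

theorem invariant15 (s : ℕ) (L : Fin s × (Fin (s / 2) ⊕ Fin (s / 2)) → List Bool)
    (step : List Bool → List Event15 → Option (List Bool)) (T : ℕ) :
    ∃ S : Finset (Fin s), S.card ≤ 2 * (Finset.univ.image L).card ∧
      ∀ v w : Fin s × (Fin (s / 2) ⊕ Fin (s / 2)), v.1 ∉ S → w.1 ∉ S → L v = L w →
        hist15 (Gn s) L step T v = hist15 (Gn s) L step T w := by
  suffices h : ∃ S : Finset (Fin s), ∃ D : Finset (List Bool),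
      D ⊆ Finset.univ.image L ∧ S.card ≤ 2 * D.card ∧
      (∀ l ∈ D, ∀ v : Fin s × (Fin (s / 2) ⊕ Fin (s / 2)), v.1 ∉ S → L v ≠ l) ∧
      (∀ v w : Fin s × (Fin (s / 2) ⊕ Fin (s / 2)), v.1 ∉ S → w.1 ∉ S → L v = L w →
        hist15 (Gn s) L step T v = hist15 (Gn s) L step T w) by
    obtain ⟨S, D, hD, hc, -, hu⟩ := h
    refine ⟨S, le_trans hc ?_, hu⟩
    have := Finset.card_le_card hD
    omega
  induction T with
  | zero => exact ⟨∅, ∅, by simp, by simp, by simp, fun v w _ _ _ => rfl⟩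
  | succ t ih =>
    obtain ⟨S, D, hDsub, hcard, habs, hunif⟩ := ih
    by_cases hUc : 2 < (Finset.univ.filter (fun c : Fin s => c ∉ S ∧
        ∃ p, (step (L (c, p)) (hist15 (Gn s) L step t (c, p))).isSome = true)).card
    · -- many transmitting components: everyone (listening) hears a collision
      refine ⟨S, D, hDsub, hcard, habs, fun v w hv hw hL => ?_⟩
      have hH := hunif v w hv hw hL
      refine hist15_succ_eq _ _ _ _ _ _ hL hH ?_
      have key : ∀ x : Fin s × (Fin (s / 2) ⊕ Fin (s / 2)),
          lev15 (Gn s) L step t x = Event15.noMsg := by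
        intro x
        have h2 : 1 < ((Finset.univ.filter (fun c : Fin s => c ∉ S ∧
            ∃ p, (step (L (c, p)) (hist15 (Gn s) L step t (c, p))).isSome = true)).erase x.1).card := by
          have := Finset.pred_card_le_card_erase
            (s := Finset.univ.filter (fun c : Fin s => c ∉ S ∧
              ∃ p, (step (L (c, p)) (hist15 (Gn s) L step t (c, p))).isSome = true)) (a := x.1)
          omega
        obtain ⟨c1, hc1, c2, hc2, hne⟩ := Finset.one_lt_card.mp h2
        obtain ⟨hc1x, hc1U⟩ := Finset.mem_erase.mp hc1
        obtain ⟨hc2x, hc2U⟩ := Finset.mem_erase.mp hc2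
        obtain ⟨-, -, p1, htx1⟩ := Finset.mem_filter.mp hc1U
        obtain ⟨-, -, p2, htx2⟩ := Finset.mem_filter.mp hc2U
        exact lev15_eq_noMsg (Gn s) L step t x (c1, p1) (c2, p2)
          (gn_adj_of_fst_ne (fun he => hc1x he.symm))
          (gn_adj_of_fst_ne (fun he => hc2x he.symm))
          (fun he => hne (congrArg Prod.fst he)) htx1 htx2
      rw [key v, key w]
    · -- at most two transmitting untouched components
      rcases (Finset.univ.filter (fun c : Fin s => c ∉ S ∧
          ∃ p, (step (L (c, p)) (hist15 (Gn s) L step t (c, p))).isSome = true)).eq_empty_or_nonempty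
        with hUe | ⟨c0, hc0⟩
      · -- no untouched component transmits
        refine ⟨S, D, hDsub, hcard, habs, fun v w hv hw hL => ?_⟩
        have hH := hunif v w hv hw hL
        refine hist15_succ_eq _ _ _ _ _ _ hL hH ?_
        have key : ∀ x : Fin s × (Fin (s / 2) ⊕ Fin (s / 2)), x.1 ∉ S →
            ∀ u, (step (L u) (hist15 (Gn s) L step t u)).isSome = true → (Gn s).Adj x u := by
          rintro x hx ⟨uc, up⟩ hu
          refine gn_adj_of_fst_ne fun he => ?_
          have : uc ∈ (Finset.univ.filter (fun c : Fin s => c ∉ S ∧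
              ∃ p, (step (L (c, p)) (hist15 (Gn s) L step t (c, p))).isSome = true)) :=
            Finset.mem_filter.mpr ⟨Finset.mem_univ _, fun hm => hx (by rw [he]; exact hm), up, hu⟩
          rw [hUe] at this
          exact Finset.notMem_empty _ this
        exact lev15_eq_of_all_adj (Gn s) L step t v w (key v hv) (key w hw)
      · -- some untouched component transmits: touch them all (≤ 2), kill one label
        obtain ⟨-, hc0S, p0, htx0⟩ := Finset.mem_filter.mp hc0
        refine ⟨S ∪ (Finset.univ.filter (fun c : Fin s => c ∉ S ∧
            ∃ p, (step (L (c, p)) (hist15 (Gn s) L step t (c, p))).isSome = true)),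
          insert (L (c0, p0)) D, ?_, ?_, ?_, ?_⟩
        · exact Finset.insert_subset (Finset.mem_image_of_mem L (Finset.mem_univ _)) hDsub
        · have hnotD : L (c0, p0) ∉ D := fun h => habs (L (c0, p0)) h (c0, p0) hc0S rfl
          rw [Finset.card_insert_of_notMem hnotD]
          have := Finset.card_union_le S (Finset.univ.filter (fun c : Fin s => c ∉ S ∧
            ∃ p, (step (L (c, p)) (hist15 (Gn s) L step t (c, p))).isSome = true))
          omega
        · intro l hl v hv hLv
          rw [Finset.mem_union, not_or] at hv
          obtain ⟨hvS, hvU⟩ := hv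
          rcases Finset.mem_insert.mp hl with hl0 | hlD
          · -- l = L (c0, p0) : then v would transmit, so v.1 is a transmitting comp
            subst hl0
            have hH := hunif v (c0, p0) hvS hc0S hLv
            have htxv : (step (L v) (hist15 (Gn s) L step t v)).isSome = true := by
              rw [hLv, hH]; exact htx0
            refine hvU (Finset.mem_filter.mpr ⟨Finset.mem_univ _, hvS, v.2, ?_⟩)
            rw [Prod.mk.eta]; exact htxv
          · exact habs l hlD v hvS hLv
        · intro v w hv hw hL
          rw [Finset.mem_union, not_or] at hv hw
          obtain ⟨hvS, hvU⟩ := hv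
          obtain ⟨hwS, hwU⟩ := hw
          have hH := hunif v w hvS hwS hL
          refine hist15_succ_eq _ _ _ _ _ _ hL hH ?_
          have key : ∀ x : Fin s × (Fin (s / 2) ⊕ Fin (s / 2)), x.1 ∉ S →
              x.1 ∉ (Finset.univ.filter (fun c : Fin s => c ∉ S ∧
                ∃ p, (step (L (c, p)) (hist15 (Gn s) L step t (c, p))).isSome = true)) →
              ∀ u, (step (L u) (hist15 (Gn s) L step t u)).isSome = true → (Gn s).Adj x u := by
            rintro x hxS hxU ⟨uc, up⟩ hu
            refine gn_adj_of_fst_ne fun he => ?_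
            refine hxU (Finset.mem_filter.mpr ⟨Finset.mem_univ _, hxS, up, ?_⟩)
            rw [he]; exact hu
          exact lev15_eq_of_all_adj (Gn s) L step t v w (key v hvS hvU) (key w hwS hwU)

theorem gn_degree_inl (s : ℕ) (c : Fin s) (j : Fin (s / 2)) :
    (Gn s).degree (c, Sum.inl j) =
      ((Finset.univ.erase c) ×ˢ (Finset.univ : Finset (Fin (s / 2) ⊕ Fin (s / 2)))).card
        + ((j : ℕ) + 1) := by
  have hnb : (Gn s).neighborFinset (c, Sum.inl j) =
      (Finset.univ.erase c) ×ˢ (Finset.univ : Finset (Fin (s / 2) ⊕ Fin (s / 2)))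
        ∪ ({c} : Finset (Fin s)) ×ˢ ((Finset.Iic j).image Sum.inr) := by
    ext y
    rw [SimpleGraph.mem_neighborFinset, Finset.mem_union, Finset.mem_product, Finset.mem_product,
      Finset.mem_erase, Finset.mem_singleton, Finset.mem_image]
    constructor
    · rintro ⟨hne, hca | hh⟩
      · exact Or.inl ⟨⟨Ne.symm hca, Finset.mem_univ _⟩, Finset.mem_univ _⟩
      · rcases hh with ⟨j', t', h1, h2, h3⟩ | ⟨j', t', h1, h2, h3⟩
        · by_cases hyc : y.1 = c
          · refine Or.inr ⟨hyc, t', Finset.mem_Iic.mpr ?_, h2.symm⟩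
            have hj : j = j' := Sum.inl_injective h1
            rw [Fin.le_def, hj]
            exact h3
          · exact Or.inl ⟨⟨hyc, Finset.mem_univ _⟩, Finset.mem_univ _⟩
        · exact absurd h1 (by simp)
    · rintro (⟨⟨hy1, -⟩, -⟩ | ⟨hy1, t, ht, hy2⟩)
      · exact ⟨fun h => hy1 (congrArg Prod.fst h).symm, Or.inl (Ne.symm hy1)⟩
      · refine ⟨fun h => ?_, Or.inr (Or.inl ⟨j, t, rfl, hy2.symm, ?_⟩)⟩
        · rw [← h] at hy2
          exact Sum.inr_ne_inl (show (Sum.inr t : Fin (s / 2) ⊕ Fin (s / 2)) = Sum.inl j from hy2)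
        · exact Fin.le_def.mp (Finset.mem_Iic.mp ht)
  rw [SimpleGraph.degree, hnb, Finset.card_union_of_disjoint, Finset.card_product,
    Finset.card_product, Finset.card_singleton, one_mul,
    Finset.card_image_of_injective _ Sum.inr_injective, Fin.card_Iic]
  exact Finset.disjoint_left.mpr fun y hy hy' =>
    ((Finset.mem_erase.mp (Finset.mem_product.mp hy).1).1)
      (Finset.mem_singleton.mp (Finset.mem_product.mp hy').1)

theorem gn_degree_inl_inj {s : ℕ} (c : Fin s) (j j' : Fin (s / 2))
    (h : (Gn s).degree (c, Sum.inl j) = (Gn s).degree (c, Sum.inl j')) : j = j' := by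
  rw [gn_degree_inl, gn_degree_inl] at h
  exact Fin.ext (by omega)


/-- any deterministic algorithm solving topology recognition on `G_n`
(`√n` even, `n > 8⁴`) in the radio model with collision detection — i.e. after `T`
rounds every node outputs a marked graph isomorphic to `G_n` with the marked node
mapped to itself — requires a labeling scheme with more than `n^{1/4}` distinct
labels. -/
theorem stmt15 (s n : ℕ) (hs : Even s) (hn : n = s * s) (hbig : 8 ^ 4 < n)
    (step : List Bool → List Event15 → Option (List Bool))
    (out : List Bool → List Event15 → (N : ℕ) × (SimpleGraph (Fin N) × Fin N))
    (T : ℕ) (L : Fin s × (Fin (s / 2) ⊕ Fin (s / 2)) → List Bool)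
    (hsolve : ∀ v : Fin s × (Fin (s / 2) ⊕ Fin (s / 2)),
      ∃ φ : (out (L v) (hist15 (Gn s) L step T v)).2.1 ≃g Gn s,
        φ (out (L v) (hist15 (Gn s) L step T v)).2.2 = v) :
    ((n : ℝ) ^ ((1 : ℝ) / 4)) < ((Finset.univ.image L).card : ℝ) := by
  obtain ⟨S, hScard, hunif⟩ := invariant15 s L step T
  have hs64 : 64 < s := by
    by_contra hle
    push_neg at hle
    have h1 : s * s ≤ 64 * 64 := Nat.mul_le_mul hle hle
    rw [hn] at hbig
    norm_num at hbig
    omega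
  obtain ⟨r, hr⟩ := hs
  -- main counting step
  have hk : s ≤ 2 * (Finset.univ.image L).card := by
    by_contra hlt
    push_neg at hlt
    have hScard' : S.card < s := by omega
    obtain ⟨c, hc⟩ : ∃ c : Fin s, c ∉ S := by
      by_contra h
      push_neg at h
      have hSu : S = Finset.univ := Finset.eq_univ_iff_forall.mpr h
      rw [hSu, Finset.card_univ, Fintype.card_fin] at hScard'
      omega
    have hinj : ∀ j j' : Fin (s / 2), L (c, Sum.inl j) = L (c, Sum.inl j') → j = j' := by
      intro j j' hLe
      have hH := hunif (c, Sum.inl j) (c, Sum.inl j') hc hc hLe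
      have hsw := hsolve (c, Sum.inl j')
      rw [← hLe, ← hH] at hsw
      obtain ⟨ψ, hψ⟩ := hsw
      obtain ⟨φ, hφ⟩ := hsolve (c, Sum.inl j)
      have hmark := congrArg (⇑φ.symm) hφ
      rw [φ.symm_apply_apply] at hmark
      have hav : ψ (φ.symm (c, Sum.inl j)) = (c, Sum.inl j') := by rw [← hmark]; exact hψ
      have hdeg : (Gn s).degree (c, Sum.inl j) = (Gn s).degree (ψ (φ.symm (c, Sum.inl j))) := by
        rw [← SimpleGraph.card_neighborSet_eq_degree, ← SimpleGraph.card_neighborSet_eq_degree]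
        exact Fintype.card_congr ((φ.symm.mapNeighborSet _).trans (ψ.mapNeighborSet _))
      rw [hav] at hdeg
      exact gn_degree_inl_inj c j j' hdeg
    have hcard2 : s / 2 ≤ (Finset.univ.image L).card := by
      have h := Finset.card_le_card_of_injOn (s := (Finset.univ : Finset (Fin (s / 2))))
        (t := Finset.univ.image L) (fun j : Fin (s / 2) => L (c, Sum.inl j))
        (fun j _ => Finset.mem_image_of_mem L (Finset.mem_univ _))
        (fun j _ j' _ h => hinj j j' h)
      rw [Finset.card_univ, Fintype.card_fin] at h
      exact h
    omega
  -- real arithmetic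
  have hsR : (64 : ℝ) < (s : ℝ) := by exact_mod_cast hs64
  have h1 : ((n : ℝ)) ^ ((1 : ℝ) / 4) = Real.sqrt s := by
    rw [hn]
    push_cast
    rw [show ((s : ℝ) * s) = (s : ℝ) ^ (2 : ℕ) by ring, ← Real.rpow_natCast ((s : ℝ)) 2,
      ← Real.rpow_mul (by positivity)]
    rw [Real.sqrt_eq_rpow]
    norm_num
  rw [h1]
  have h2 : Real.sqrt s < (s : ℝ) / 2 := by
    rw [Real.sqrt_lt' (by linarith : (0 : ℝ) < (s : ℝ) / 2)]
    nlinarith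
  have h3 : (s : ℝ) ≤ 2 * ((Finset.univ.image L).card : ℝ) := by exact_mod_cast hk
  linarith
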